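/- If X is a digraph whose underlying graph Γ(X) is a forest (contains no cycles), then H(X) is cospectral with the adjacency matrix A(Γ(X)) of the underlying graph: the characteristic polynomial of H(X) equals the characteristic polynomial of A(Γ(X)). -/

import Mathlib

open Matrix Complex

/-- Hermitian adjacency matrix of a digraph given by its arc relation `E`. -/
def hermAdj {V : Type*} (E : V → V → Prop) [DecidableRel E] : Matrix V V ℂ :=
  fun u v =>
    if E u v ∧ E v u then 1
    else if E u v then Complex.I
    else if E v u then -Complex.I
    else 0

/-- The underlying (simple) graph of a digraph given by its arc relation `E`. -/
def underlying {V : Type*} (E : V → V → Prop) : SimpleGraph V where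
  Adj u v := u ≠ v ∧ (E u v ∨ E v u)
  symm := ⟨fun u v h => ⟨h.1.symm, h.2.symm⟩⟩
  loopless := ⟨fun v h => h.1 rfl⟩

instance {V : Type*} [DecidableEq V] (E : V → V → Prop) [DecidableRel E] :
    DecidableRel (underlying E).Adj := fun u v =>
  inferInstanceAs (Decidable (u ≠ v ∧ (E u v ∨ E v u)))

/-- In a forest, given edge weights `ε` with `ε u v * ε v u = 1` on edges, there is a
"switching function" `f` of nonzero scalars with `f v = f u * ε u v` across each edge. -/
lemma exists_switching {V : Type*} :
    ∀ (n : ℕ) (G : SimpleGraph V), G.edgeSet.Finite → G.edgeSet.ncard = n → G.IsAcyclic →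
      ∀ ε : V → V → ℂ, (∀ u v, G.Adj u v → ε u v * ε v u = 1) →
        ∃ f : V → ℂ, (∀ v, f v ≠ 0) ∧ ∀ u v, G.Adj u v → f v = f u * ε u v := by
  intro n
  induction n using Nat.strong_induction_on with
  | _ n ih =>
    intro G hfin hcard hac ε hε
    classical
    by_cases hE : G.edgeSet = ∅
    · refine ⟨fun _ => 1, fun _ => one_ne_zero, fun u v huv => ?_⟩
      have : s(u, v) ∈ G.edgeSet := huv
      simp [hE] at this
    · obtain ⟨e, he⟩ := Set.nonempty_iff_ne_empty.2 hE
      induction e using Sym2.ind with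
      | _ a b =>
        have hab : G.Adj a b := he
        set G' : SimpleGraph V := G \ SimpleGraph.fromEdgeSet {s(a, b)} with hG'
        have hle : G' ≤ G := sdiff_le
        have hac' : G'.IsAcyclic := fun v c hc => hac (c.mapLe hle) (hc.mapLe hle)
        have hedge : G'.edgeSet = G.edgeSet \ {s(a, b)} := by
          rw [hG', SimpleGraph.edgeSet_sdiff, SimpleGraph.edgeSet_fromEdgeSet]
          rw [Set.diff_diff_right]
          have : G.edgeSet ∩ {e : Sym2 V | e.IsDiag} = ∅ := by
            ext e
            simp only [Set.mem_inter_iff, Set.mem_setOf_eq, Set.mem_empty_iff_false, iff_false,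
              not_and]
            intro hmem
            exact SimpleGraph.not_isDiag_of_mem_edgeSet G hmem
          rw [show G.edgeSet ∩ Sym2.diagSet = ∅ from this, Set.union_empty]
        have hfin' : G'.edgeSet.Finite := hedge ▸ hfin.diff
        have hlt : G'.edgeSet.ncard < n := by
          rw [← hcard]
          apply Set.ncard_lt_ncard _ hfin
          rw [hedge]
          exact ⟨Set.diff_subset, fun hsub => (hsub he).2 rfl⟩
        obtain ⟨f', hf'0, hf'⟩ := ih _ hlt G' hfin' rfl hac' ε
          (fun u v huv => hε u v (hle huv))
        -- the deleted edge is a bridge, so `a` is not reachable from `b` in `G'`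
        have hbridge : G.IsBridge s(a, b) :=
          (SimpleGraph.isAcyclic_iff_forall_adj_isBridge.mp hac) hab
        have hnr : ¬ G'.Reachable a b := SimpleGraph.isBridge_iff.mp hbridge
        have hεab : ε a b ≠ 0 := left_ne_zero_of_mul_eq_one (hε a b hab)
        set c : ℂ := f' a * ε a b * (f' b)⁻¹ with hc
        have hc0 : c ≠ 0 := by
          apply mul_ne_zero (mul_ne_zero (hf'0 a) hεab)
          exact inv_ne_zero (hf'0 b)
        refine ⟨fun v => if G'.Reachable b v then f' v * c else f' v, ?_, ?_⟩
        · intro v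
          by_cases hr : G'.Reachable b v <;> simp [hr, hf'0 v, hc0]
        · intro u v huv
          by_cases hsuv : s(u, v) = s(a, b)
          · rcases Sym2.eq_iff.mp hsuv with ⟨rfl, rfl⟩ | ⟨rfl, rfl⟩
            · have h1 : G'.Reachable v v := SimpleGraph.Reachable.refl v
              have h2 : ¬ G'.Reachable v u := fun h => hnr h.symm
              simp only [h1, h2, if_true, if_false]
              rw [hc, show f' v * (f' u * ε u v * (f' v)⁻¹) =
                (f' v * (f' v)⁻¹) * (f' u * ε u v) from by ring,
                mul_inv_cancel₀ (hf'0 v), one_mul]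
            · have h1 : G'.Reachable u u := SimpleGraph.Reachable.refl u
              have h2 : ¬ G'.Reachable u v := fun h => hnr h.symm
              simp only [h1, h2, if_true, if_false]
              have hvu : ε v u * ε u v = 1 := hε v u hab
              rw [hc, show f' u * (f' v * ε v u * (f' u)⁻¹) * ε u v =
                (f' u * (f' u)⁻¹) * (f' v * (ε v u * ε u v)) from by ring,
                mul_inv_cancel₀ (hf'0 u), hvu, one_mul, mul_one]
          · have huv' : G'.Adj u v := by
              rw [hG', SimpleGraph.sdiff_adj, SimpleGraph.fromEdgeSet_adj]
              exact ⟨huv, fun h => hsuv h.1⟩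
            have hre : G'.Reachable b u ↔ G'.Reachable b v :=
              ⟨fun h => h.trans huv'.reachable, fun h => h.trans huv'.symm.reachable⟩
            have heq := hf' u v huv'
            by_cases hru : G'.Reachable b u
            · have hrv : G'.Reachable b v := hre.mp hru
              simp only [hru, hrv, if_true]
              rw [heq]; ring
            · have hrv : ¬ G'.Reachable b v := fun h => hru (hre.mpr h)
              simp only [hru, hrv, if_false]
              exact heq

/-- If the underlying graph of a digraph `X` is a forest, then `H(X)` is cospectral
with the adjacency matrix of the underlying graph. -/
theorem stmt13 {V : Type*} [Fintype V] [DecidableEq V]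
    (E : V → V → Prop) [DecidableRel E] (hirr : ∀ v, ¬ E v v)
    (hforest : (underlying E).IsAcyclic) :
    (hermAdj E).charpoly = ((underlying E).adjMatrix ℂ).charpoly := by
  classical
  set G := underlying E with hG
  set H := hermAdj E with hH
  set A := G.adjMatrix ℂ with hA
  have hε : ∀ u v, G.Adj u v → H u v * H v u = 1 := by
    intro u v huv
    by_cases h1 : E u v <;> by_cases h2 : E v u
    · simp [hH, hermAdj, h1, h2]
    · simp [hH, hermAdj, h1, h2, Complex.I_mul_I]
    · simp [hH, hermAdj, h1, h2, Complex.I_mul_I]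
    · exfalso; rcases (show u ≠ v ∧ (E u v ∨ E v u) from huv).2 with h | h
      · exact h1 h
      · exact h2 h
  obtain ⟨f, hf0, hf⟩ := exists_switching G.edgeSet.ncard G (Set.toFinite _) rfl hforest
    (fun u v => H u v) hε
  -- key matrix identity : A * D = D * H, where D = diagonal f
  set D : Matrix V V ℂ := Matrix.diagonal f with hD
  have key : A * D = D * H := by
    ext u v
    rw [hD, Matrix.mul_diagonal, Matrix.diagonal_mul]
    by_cases huv : G.Adj u v
    · rw [hA]
      rw [SimpleGraph.adjMatrix_apply]
      rw [if_pos huv, one_mul, hf u v huv]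
    · have hA0 : A u v = 0 := by rw [hA, SimpleGraph.adjMatrix_apply, if_neg huv]
      have hH0 : H u v = 0 := by
        by_cases heq : u = v
        · subst heq
          simp [hH, hermAdj, hirr u]
        · have : ¬ (E u v ∨ E v u) := by
            intro hor
            exact huv (show u ≠ v ∧ (E u v ∨ E v u) from ⟨heq, hor⟩)
          push_neg at this
          simp [hH, hermAdj, this.1, this.2]
      rw [hA0, hH0, zero_mul, mul_zero]
  -- pass to charmatrices over ℂ[X]
  set Dp : Matrix V V (Polynomial ℂ) := D.map Polynomial.C with hDp
  have keyp : charmatrix A * Dp = Dp * charmatrix H := by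
    rw [charmatrix, charmatrix, sub_mul, mul_sub]
    congr 1
    · exact (Matrix.scalar_commute (Polynomial.X : Polynomial ℂ)
        (fun r => Commute.all _ r) Dp).eq
    · have hDp' : Dp = (Polynomial.C : ℂ →+* Polynomial ℂ).mapMatrix D := rfl
      rw [hDp', ← _root_.map_mul, ← _root_.map_mul, key]
  have hdet : Dp.det ≠ 0 := by
    rw [hDp, ← RingHom.mapMatrix_apply, ← RingHom.map_det]
    rw [hD, Matrix.det_diagonal]
    simp only [ne_eq, Polynomial.C_eq_zero]
    exact Finset.prod_ne_zero_iff.mpr (fun v _ => hf0 v)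
  have hdets : (charmatrix A).det * Dp.det = Dp.det * (charmatrix H).det := by
    rw [← Matrix.det_mul, ← Matrix.det_mul, keyp]
  rw [mul_comm (Dp.det)] at hdets
  have := mul_right_cancel₀ hdet hdets
  rw [Matrix.charpoly, Matrix.charpoly, this]
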